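/- Let S ⊆ F be a finite set, ⋆ : S × S → 2^S a fusion rule on S, and n a positive integer. Then there exists a commutative nonassociative F-algebra U with elements u₁,…,u_n, each an (S,⋆)-axis of U, which generate U as an F-algebra, with the following universal property: for every commutative nonassociative F-algebra N with elements b₁,…,b_n, each an (S,⋆)-axis of N, generating N as an F-algebra, there exists a unique F-algebra homomorphism φ : U → N with φ(u_i) = b_i for all i = 1,…,n; moreover this φ is surjective. -/

import Mathlib

/-- The `s`-eigenspace of left multiplication by `a`. -/
def eigSp {F M : Type} [Field F] [NonUnitalNonAssocCommRing M] [Module F M]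
    [SMulCommClass F M M] [IsScalarTower F M M] (a : M) (s : F) : Submodule F M where
  carrier := {x | a * x = s • x}
  add_mem' := by
    intro x y hx hy
    simp only [Set.mem_setOf_eq] at *
    rw [mul_add, hx, hy, smul_add]
  zero_mem' := by simp
  smul_mem' := by
    intro c x hx
    simp only [Set.mem_setOf_eq] at *
    rw [mul_smul_comm, hx, smul_smul, mul_comm, ← smul_smul]


/-- A commutative nonassociative algebra over the field `F`, bundled with its structure. -/
structure CommNAAlg (F : Type) [Field F] where
  carrier : Type
  [ring : NonUnitalNonAssocCommRing carrier]
  [mod : Module F carrier]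
  [scc : SMulCommClass F carrier carrier]
  [ist : IsScalarTower F carrier carrier]

attribute [instance] CommNAAlg.ring CommNAAlg.mod CommNAAlg.scc CommNAAlg.ist

/-- An `(S,⋆)`-axis: an idempotent whose left multiplication is semisimple with
eigenvalues in `S`, the eigenspaces decomposing `M` and obeying the fusion rule `⋆`. -/
def IsFusionAxis {F : Type} [Field F] [DecidableEq F] {M : Type}
    [NonUnitalNonAssocCommRing M] [Module F M] [SMulCommClass F M M] [IsScalarTower F M M]
    (S : Finset F) (star : ↥S → ↥S → Set ↥S) (a : M) : Prop :=
  a * a = a ∧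
  DirectSum.IsInternal (fun s : ↥S => eigSp a (s : F)) ∧
  ∀ s t : ↥S, ∀ x ∈ eigSp a (s : F), ∀ y ∈ eigSp a (t : F),
    x * y ∈ ⨆ u ∈ star s t, eigSp a (u : F)

open Polynomial
set_option linter.unusedSectionVars false
set_option linter.unusedVariables false

variable {F : Type} [Field F] [DecidableEq F]

section Generic
variable {M : Type} [NonUnitalNonAssocCommRing M] [Module F M]
  [SMulCommClass F M M] [IsScalarTower F M M]

noncomputable def Lmul (a : M) : Module.End F M := LinearMap.mulLeft F a

lemma mem_eigSp_iff {a : M} {s : F} {x : M} :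
    x ∈ eigSp a s ↔ aeval (Lmul (F := F) a) (X - C s) x = 0 := by
  simp only [map_sub, aeval_X, aeval_C, LinearMap.sub_apply]
  change a * x = s • x ↔ Lmul (F := F) a x - (algebraMap F (Module.End F M) s) x = 0
  rw [sub_eq_zero]
  constructor
  · intro h; rw [Module.algebraMap_end_apply]; exact h
  · intro h; rw [Module.algebraMap_end_apply] at h; exact h

lemma aeval_zero_of_dvd {a : M} {s : F} {x : M} (hx : x ∈ eigSp a s) {q : F[X]}
    (h : (X - C s) ∣ q) : aeval (Lmul (F := F) a) q x = 0 := by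
  obtain ⟨c, rfl⟩ := h
  rw [mul_comm, map_mul, Module.End.mul_apply, mem_eigSp_iff.mp hx, map_zero]

lemma sup_killed {a : M} {ι : Type*} {T : Set ι} {v : ι → F} {q : F[X]}
    (hq : ∀ i ∈ T, (X - C (v i)) ∣ q) {z : M}
    (hz : z ∈ ⨆ i ∈ T, eigSp a (v i)) : aeval (Lmul (F := F) a) q z = 0 := by
  have : (⨆ i ∈ T, eigSp a (v i)) ≤ LinearMap.ker (aeval (Lmul (F := F) a) q) := by
    refine iSup₂_le fun i hi => fun x hx => ?_
    exact LinearMap.mem_ker.mpr (aeval_zero_of_dvd hx (hq i hi))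
  exact LinearMap.mem_ker.mp (this hz)

/-- p-annihilation from a full eigenspace decomposition. -/
lemma pann_of_iSup_eq_top {a : M} {S : Finset F}
    (h : ⨆ s : ↥S, eigSp a (s : F) = ⊤) (x : M) :
    aeval (Lmul (F := F) a) (∏ s ∈ S, (X - C s)) x = 0 := by
  have hx : x ∈ ⨆ s ∈ (Set.univ : Set ↥S), eigSp a (s : F) := by
    rw [iSup_univ, h]; trivial
  exact sup_killed (v := fun s : ↥S => (s : F)) (q := ∏ s ∈ S, (X - C s)) (fun i _ => Finset.dvd_prod_of_mem (fun s : F => X - C s) i.2) hx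

lemma proj_mem {a : M} {S : Finset F} {u : F} (hu : u ∈ S) {x : M}
    (hx : aeval (Lmul (F := F) a) (∏ s ∈ S, (X - C s)) x = 0) :
    aeval (Lmul (F := F) a) (∏ s ∈ S.erase u, (X - C s)) x ∈ eigSp a u := by
  rw [mem_eigSp_iff, ← Module.End.mul_apply, ← map_mul,
    show (X - C u) * ∏ s ∈ S.erase u, (X - C s) = ∏ s ∈ S, (X - C s) from
      Finset.mul_prod_erase S (fun s => X - C s) hu]
  exact hx

lemma basis_eq_smul_prod {S : Finset F} {u : F} :
    Lagrange.basis S id u = (∏ s ∈ S.erase u, (u - s)⁻¹) •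
      (∏ s ∈ S.erase u, (X - C s)) := by
  rw [Lagrange.basis, smul_eq_C_mul, map_prod, ← Finset.prod_mul_distrib]
  exact Finset.prod_congr rfl fun s _ => rfl

lemma basis_proj_mem {a : M} {S : Finset F} {u : F} (hu : u ∈ S) {x : M}
    (hx : aeval (Lmul (F := F) a) (∏ s ∈ S, (X - C s)) x = 0) :
    aeval (Lmul (F := F) a) (Lagrange.basis S id u) x ∈ eigSp a u := by
  rw [basis_eq_smul_prod, map_smul, LinearMap.smul_apply]
  exact Submodule.smul_mem _ _ (proj_mem hu hx)

lemma sum_basis_proj {a : M} {S : Finset F} (hS : S.Nonempty) (x : M) :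
    ∑ u ∈ S, aeval (Lmul (F := F) a) (Lagrange.basis S id u) x = x := by
  have h := Lagrange.sum_basis (v := (id : F → F)) (Set.injOn_id _) hS
  calc ∑ u ∈ S, aeval (Lmul (F := F) a) (Lagrange.basis S id u) x
      = aeval (Lmul (F := F) a) (∑ u ∈ S, Lagrange.basis S id u) x := by
        rw [map_sum, LinearMap.coe_sum, Finset.sum_apply]
    _ = x := by rw [h, map_one, Module.End.one_apply]

lemma iSup_eq_top_of_pann {a : M} {S : Finset F}
    (hp : ∀ x : M, aeval (Lmul (F := F) a) (∏ s ∈ S, (X - C s)) x = 0) :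
    ⨆ s : ↥S, eigSp a (s : F) = ⊤ := by
  rw [eq_top_iff]
  intro x _
  rcases S.eq_empty_or_nonempty with hS | hS
  · have := hp x
    rw [hS, Finset.prod_empty, map_one, Module.End.one_apply] at this
    rw [this]; exact Submodule.zero_mem _
  · rw [← sum_basis_proj (a := a) hS x]
    refine Submodule.sum_mem _ fun u hu => ?_
    exact Submodule.mem_iSup_of_mem ⟨u, hu⟩ (basis_proj_mem hu (hp x))

lemma eigSp_eq_eigenspace (a : M) (s : F) :
    eigSp a s = Module.End.eigenspace (Lmul (F := F) a) s := by
  ext x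
  rw [Module.End.mem_eigenspace_iff]
  rfl

lemma isInternal_of_pann {a : M} {S : Finset F}
    (hp : ∀ x : M, aeval (Lmul (F := F) a) (∏ s ∈ S, (X - C s)) x = 0) :
    DirectSum.IsInternal (fun s : ↥S => eigSp a (s : F)) := by
  refine DirectSum.isInternal_submodule_of_iSupIndep_of_iSup_eq_top ?_ (iSup_eq_top_of_pann hp)
  have h1 : iSupIndep (Module.End.eigenspace (Lmul (F := F) a)) :=
    Module.End.eigenspaces_iSupIndep (R := F) (Lmul a)
  have h2 := h1.comp (Subtype.coe_injective (p := fun s => s ∈ S))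
  convert h2 using 1
  funext s
  exact eigSp_eq_eigenspace a (s : F)

end Generic

section HomAeval
variable {A B : Type} [NonUnitalNonAssocSemiring A] [Module F A]
  [SMulCommClass F A A] [IsScalarTower F A A]
  [NonUnitalNonAssocSemiring B] [Module F B]
  [SMulCommClass F B B] [IsScalarTower F B B]

lemma hom_mulLeft_pow (ψ : A →ₙₐ[F] B) (a : A) (k : ℕ) (x : A) :
    ψ ((LinearMap.mulLeft F a ^ k) x) = (LinearMap.mulLeft F (ψ a) ^ k) (ψ x) := by
  induction k generalizing x with
  | zero => simp
  | succ k ih =>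
    simp only [pow_succ, Module.End.mul_apply]
    rw [ih, LinearMap.mulLeft_apply, LinearMap.mulLeft_apply, map_mul]

lemma hom_aeval (ψ : A →ₙₐ[F] B) (a : A) (q : F[X]) (x : A) :
    ψ (aeval (LinearMap.mulLeft F a) q x) =
      aeval (LinearMap.mulLeft F (ψ a)) q (ψ x) := by
  rw [aeval_eq_sum_range, aeval_eq_sum_range, LinearMap.sum_apply, LinearMap.sum_apply,
    map_sum]
  refine Finset.sum_congr rfl fun k _ => ?_
  rw [LinearMap.smul_apply, LinearMap.smul_apply, map_smul, hom_mulLeft_pow]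

end HomAeval

noncomputable section Constr
open FreeNonUnitalNonAssocAlgebra

variable (F : Type) [Field F] [DecidableEq F] (S : Finset F)
  (star : ↥S → ↥S → Set ↥S) (n : ℕ)

abbrev FA := FreeNonUnitalNonAssocAlgebra F (Fin n)

def wgen (i : Fin n) : FA F n := of F i

def pS : F[X] := ∏ s ∈ S, (X - C s)

def qS (u : F) : F[X] := ∏ t ∈ S.erase u, (X - C t)

variable {n} in
def Good (J : Submodule F (FA F n)) : Prop :=
  (∀ x y : FA F n, x ∈ J → x * y ∈ J) ∧
  (∀ x y : FA F n, y ∈ J → x * y ∈ J) ∧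
  (∀ x y : FA F n, x * y - y * x ∈ J) ∧
  (∀ i, wgen F n i * wgen F n i - wgen F n i ∈ J) ∧
  (∀ i (x : FA F n), aeval (LinearMap.mulLeft F (wgen F n i)) (pS F S) x ∈ J) ∧
  (∀ i (s t u : ↥S), u ∉ star s t → ∀ x y : FA F n,
     wgen F n i * x - (s : F) • x ∈ J → wgen F n i * y - (t : F) • y ∈ J →
     aeval (LinearMap.mulLeft F (wgen F n i)) (qS F S u) (x * y) ∈ J)

lemma good_top : Good F S star (⊤ : Submodule F (FA F n)) := by
  refine ⟨?_, ?_, ?_, ?_, ?_, ?_⟩ <;> intros <;> trivial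

def KK : Submodule F (FA F n) := sInf {J | Good F S star J}

lemma KK_le {J : Submodule F (FA F n)} (hJ : Good F S star J) : KK F S star n ≤ J :=
  sInf_le hJ

lemma mem_KK_iff {x : FA F n} :
    x ∈ KK F S star n ↔ ∀ J : Submodule F (FA F n), Good F S star J → x ∈ J :=
  Submodule.mem_sInf

lemma good_KK : Good F S star (KK F S star n) := by
  refine ⟨?_, ?_, ?_, ?_, ?_, ?_⟩
  · intro x y hx
    exact (mem_KK_iff F S star n).mpr fun J hJ => hJ.1 x y ((KK_le F S star n hJ) hx)
  · intro x y hy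
    exact (mem_KK_iff F S star n).mpr fun J hJ => hJ.2.1 x y ((KK_le F S star n hJ) hy)
  · intro x y
    exact (mem_KK_iff F S star n).mpr fun J hJ => hJ.2.2.1 x y
  · intro i
    exact (mem_KK_iff F S star n).mpr fun J hJ => hJ.2.2.2.1 i
  · intro i x
    exact (mem_KK_iff F S star n).mpr fun J hJ => hJ.2.2.2.2.1 i x
  · intro i s t u hu x y hx hy
    exact (mem_KK_iff F S star n).mpr fun J hJ =>
      hJ.2.2.2.2.2 i s t u hu x y ((KK_le F S star n hJ) hx) ((KK_le F S star n hJ) hy)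

abbrev Ucar := (FA F n) ⧸ (KK F S star n)

def gMul : FA F n →ₗ[F] FA F n →ₗ[F] Ucar F S star n :=
  (LinearMap.mul F (FA F n)).compr₂ (KK F S star n).mkQ

lemma gMul_apply (x y : FA F n) :
    gMul F S star n x y = Submodule.Quotient.mk (x * y) := rfl

def gMul1 : FA F n →ₗ[F] (Ucar F S star n →ₗ[F] Ucar F S star n) where
  toFun x := (KK F S star n).liftQ (gMul F S star n x)
    (by
      intro y hy
      rw [LinearMap.mem_ker, gMul_apply, Submodule.Quotient.mk_eq_zero]
      exact (good_KK F S star n).2.1 x y hy)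
  map_add' x x' := by
    refine LinearMap.ext fun z => ?_
    obtain ⟨y, rfl⟩ := (KK F S star n).mkQ_surjective z
    simp only [Submodule.mkQ_apply, Submodule.liftQ_apply, LinearMap.add_apply, map_add]
  map_smul' c x := by
    refine LinearMap.ext fun z => ?_
    obtain ⟨y, rfl⟩ := (KK F S star n).mkQ_surjective z
    simp only [Submodule.mkQ_apply, Submodule.liftQ_apply, LinearMap.smul_apply, map_smul,
      RingHom.id_apply]

def mulU : Ucar F S star n →ₗ[F] Ucar F S star n →ₗ[F] Ucar F S star n :=
  (KK F S star n).liftQ (gMul1 F S star n)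
    (by
      intro x hx
      rw [LinearMap.mem_ker]
      refine LinearMap.ext fun z => ?_
      obtain ⟨y, rfl⟩ := (KK F S star n).mkQ_surjective z
      show (KK F S star n).liftQ (gMul F S star n x) _ (Submodule.Quotient.mk y) = 0
      rw [Submodule.liftQ_apply, gMul_apply, Submodule.Quotient.mk_eq_zero]
      exact (good_KK F S star n).1 x y hx)

instance : Mul (Ucar F S star n) := ⟨fun x y => mulU F S star n x y⟩

lemma mk_mul (x y : FA F n) :
    (Submodule.Quotient.mk x : Ucar F S star n) * Submodule.Quotient.mk y =
      Submodule.Quotient.mk (x * y) := rfl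

instance : NonUnitalNonAssocCommRing (Ucar F S star n) :=
  { (inferInstance : AddCommGroup (Ucar F S star n)) with
    mul := fun x y => x * y
    left_distrib := fun a b c => map_add (mulU F S star n a) b c
    right_distrib := fun a b c => by
      show mulU F S star n (a + b) c = mulU F S star n a c + mulU F S star n b c
      rw [map_add]; rfl
    zero_mul := fun a => by
      show mulU F S star n 0 a = 0
      rw [map_zero]; rfl
    mul_zero := fun a => map_zero (mulU F S star n a)
    mul_comm := fun a b => by
      obtain ⟨x, rfl⟩ := (KK F S star n).mkQ_surjective a
      obtain ⟨y, rfl⟩ := (KK F S star n).mkQ_surjective b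
      show (Submodule.Quotient.mk (x * y) : Ucar F S star n) = Submodule.Quotient.mk (y * x)
      rw [Submodule.Quotient.eq]
      exact (good_KK F S star n).2.2.1 x y }

instance : SMulCommClass F (Ucar F S star n) (Ucar F S star n) :=
  ⟨fun c a b => ((mulU F S star n a).map_smul c b).symm⟩

instance : IsScalarTower F (Ucar F S star n) (Ucar F S star n) :=
  ⟨fun c a b => by
    show mulU F S star n (c • a) b = c • mulU F S star n a b
    rw [map_smul]; rfl⟩

end Constr

noncomputable section Main
open FreeNonUnitalNonAssocAlgebra

variable (F : Type) [Field F] [DecidableEq F] (S : Finset F)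
  (star : ↥S → ↥S → Set ↥S) (n : ℕ)

def mkHom : FA F n →ₙₐ[F] Ucar F S star n where
  toFun x := Submodule.Quotient.mk x
  map_smul' c x := rfl
  map_zero' := rfl
  map_add' x y := rfl
  map_mul' x y := rfl

lemma mkHom_apply (x : FA F n) :
    mkHom F S star n x = Submodule.Quotient.mk x := rfl

lemma mkHom_surjective : Function.Surjective (mkHom F S star n) :=
  (KK F S star n).mkQ_surjective

def uU (i : Fin n) : Ucar F S star n := mkHom F S star n (wgen F n i)

lemma Lmul_eq {M : Type} [NonUnitalNonAssocCommRing M] [Module F M]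
    [SMulCommClass F M M] [IsScalarTower F M M] (a : M) :
    Lmul (F := F) a = LinearMap.mulLeft F a := rfl

lemma U_pann (i : Fin n) (z : Ucar F S star n) :
    aeval (Lmul (F := F) (uU F S star n i)) (pS F S) z = 0 := by
  obtain ⟨x, rfl⟩ := mkHom_surjective F S star n z
  rw [Lmul_eq, uU, ← hom_aeval, mkHom_apply, Submodule.Quotient.mk_eq_zero]
  exact (good_KK F S star n).2.2.2.2.1 i x

lemma U_eig_iff (i : Fin n) (s : F) (x : FA F n) :
    (Submodule.Quotient.mk x : Ucar F S star n) ∈ eigSp (uU F S star n i) s ↔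
      wgen F n i * x - s • x ∈ KK F S star n := by
  change uU F S star n i * Submodule.Quotient.mk x = s • Submodule.Quotient.mk x ↔ _
  rw [uU, mkHom_apply, mk_mul, ← Submodule.Quotient.mk_smul, ← sub_eq_zero,
    ← Submodule.Quotient.mk_sub, Submodule.Quotient.mk_eq_zero]

lemma U_axis (i : Fin n) :
    uU F S star n i * uU F S star n i = uU F S star n i ∧
    DirectSum.IsInternal (fun s : ↥S => eigSp (uU F S star n i) (s : F)) ∧
    ∀ s t : ↥S, ∀ x ∈ eigSp (uU F S star n i) (s : F),
      ∀ y ∈ eigSp (uU F S star n i) (t : F),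
        x * y ∈ ⨆ u ∈ star s t, eigSp (uU F S star n i) (u : F) := by
  refine ⟨?_, ?_, ?_⟩
  · rw [uU, mkHom_apply, mk_mul, Submodule.Quotient.eq]
    exact (good_KK F S star n).2.2.2.1 i
  · exact isInternal_of_pann (U_pann F S star n i)
  · intro s t xb hx yb hy
    obtain ⟨x, rfl⟩ := mkHom_surjective F S star n xb
    obtain ⟨y, rfl⟩ := mkHom_surjective F S star n yb
    rw [mkHom_apply] at hx hy
    have hz : ∀ u : ↥S, u ∉ star s t →
        aeval (Lmul (F := F) (uU F S star n i)) (qS F S u)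
          (mkHom F S star n x * mkHom F S star n y) = 0 := by
      intro u hu
      rw [← map_mul, Lmul_eq, uU, ← hom_aeval, mkHom_apply, Submodule.Quotient.mk_eq_zero]
      exact (good_KK F S star n).2.2.2.2.2 i s t u hu x y
        ((U_eig_iff F S star n i s x).mp hx) ((U_eig_iff F S star n i t y).mp hy)
    have hSne : S.Nonempty := ⟨(s : F), s.2⟩
    set z := mkHom F S star n x * mkHom F S star n y with hzdef
    rw [← sum_basis_proj (a := uU F S star n i) hSne z]
    refine Submodule.sum_mem _ fun v hv => ?_
    by_cases hmem : (⟨v, hv⟩ : ↥S) ∈ star s t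
    · refine Submodule.mem_iSup_of_mem ⟨v, hv⟩ (Submodule.mem_iSup_of_mem hmem ?_)
      exact basis_proj_mem hv (U_pann F S star n i z)
    · rw [basis_eq_smul_prod, map_smul, LinearMap.smul_apply]
      have := hz ⟨v, hv⟩ hmem
      rw [qS] at this
      rw [this, smul_zero]
      exact Submodule.zero_mem _

lemma U_adjoin_top :
    NonUnitalAlgebra.adjoin F (Set.range (uU F S star n)) = ⊤ := by
  set T := NonUnitalAlgebra.adjoin F (Set.range (uU F S star n)) with hT
  rw [eq_top_iff]
  intro z _
  let τ : FA F n →ₙₐ[F] T :=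
    lift F fun i => (⟨uU F S star n i,
      NonUnitalAlgebra.subset_adjoin F (Set.mem_range_self i)⟩ : T)
  have hcomp : (NonUnitalSubalgebraClass.subtype T).comp τ = mkHom F S star n := by
    refine FreeNonUnitalNonAssocAlgebra.hom_ext F fun i => ?_
    show (NonUnitalSubalgebraClass.subtype T) (τ (of F i)) = mkHom F S star n (of F i)
    rw [show τ (of F i) = _ from lift_of_apply F _ i]
    rfl
  obtain ⟨x, rfl⟩ := mkHom_surjective F S star n z
  rw [← hcomp]
  exact (τ x).2

variable {N : Type} [NonUnitalNonAssocCommRing N] [Module F N]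
  [SMulCommClass F N N] [IsScalarTower F N N]

/-- The linear map underlying a non-unital algebra hom out of the free algebra. -/
def linOf (ψ : FA F n →ₙₐ[F] N) : FA F n →ₗ[F] N where
  toFun := ψ
  map_add' := map_add ψ
  map_smul' := map_smul ψ

lemma mem_ker_linOf {ψ : FA F n →ₙₐ[F] N} {x : FA F n} :
    x ∈ LinearMap.ker (linOf F n ψ) ↔ ψ x = 0 := Iff.rfl

lemma good_ker (b : Fin n → N)
    (hb : ∀ i, b i * b i = b i ∧
      DirectSum.IsInternal (fun s : ↥S => eigSp (b i) (s : F)) ∧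
      ∀ s t : ↥S, ∀ x ∈ eigSp (b i) (s : F), ∀ y ∈ eigSp (b i) (t : F),
        x * y ∈ ⨆ u ∈ star s t, eigSp (b i) (u : F)) :
    Good F S star (LinearMap.ker (linOf F n (lift F b))) := by
  set ψ : FA F n →ₙₐ[F] N := lift F b with hψ
  have hwb : ∀ i, ψ (wgen F n i) = b i := fun i => lift_of_apply F b i
  refine ⟨?_, ?_, ?_, ?_, ?_, ?_⟩
  · intro x y hx
    rw [mem_ker_linOf] at hx ⊢
    rw [map_mul, hx, zero_mul]
  · intro x y hy
    rw [mem_ker_linOf] at hy ⊢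
    rw [map_mul, hy, mul_zero]
  · intro x y
    rw [mem_ker_linOf, map_sub, map_mul, map_mul, mul_comm, sub_self]
  · intro i
    rw [mem_ker_linOf, map_sub, map_mul, hwb, (hb i).1, sub_self]
  · intro i x
    rw [mem_ker_linOf, hom_aeval, hwb]
    rw [pS, ← Lmul_eq]
    exact pann_of_iSup_eq_top (hb i).2.1.submodule_iSup_eq_top (ψ x)
  · intro i s t u hu x y hx hy
    rw [mem_ker_linOf] at hx hy ⊢
    have hxe : ψ x ∈ eigSp (b i) (s : F) := by
      have : ψ (wgen F n i * x - (s : F) • x) = 0 := hx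
      rw [map_sub, map_mul, map_smul, hwb, sub_eq_zero] at this
      exact this
    have hye : ψ y ∈ eigSp (b i) (t : F) := by
      have : ψ (wgen F n i * y - (t : F) • y) = 0 := hy
      rw [map_sub, map_mul, map_smul, hwb, sub_eq_zero] at this
      exact this
    have hfus := (hb i).2.2 s t (ψ x) hxe (ψ y) hye
    rw [hom_aeval, hwb, map_mul, ← Lmul_eq]
    refine sup_killed (v := fun u' : ↥S => (u' : F)) ?_ hfus
    intro u' hu'
    rw [qS]
    refine Finset.dvd_prod_of_mem (fun s : F => X - C s) (Finset.mem_erase.mpr ⟨?_, u'.2⟩)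
    intro hcoe
    exact hu (by rwa [show u' = u from Subtype.ext hcoe] at hu')

lemma key_eval {N : Type} [NonUnitalNonAssocCommRing N] [Module F N]
    [SMulCommClass F N N] [IsScalarTower F N N] (b : Fin n → N)
    (φ' : Ucar F S star n →ₙₐ[F] N) (h' : ∀ i, φ' (uU F S star n i) = b i)
    (x : FA F n) : φ' (Submodule.Quotient.mk x) = lift F b x := by
  have hcomp : φ'.comp (mkHom F S star n) = lift F b := by
    refine FreeNonUnitalNonAssocAlgebra.hom_ext F fun i => ?_
    show φ' (mkHom F S star n (of F i)) = lift F b (of F i)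
    rw [lift_of_apply]
    exact h' i
  calc φ' (Submodule.Quotient.mk x) = φ'.comp (mkHom F S star n) x := rfl
    _ = lift F b x := by rw [hcomp]

end Main


/-- Corollary 3: the category of `n`-generated `(S,⋆)`-axial algebras has a universal
object. -/
theorem universal_axial_algebra (F : Type) [Field F] [DecidableEq F]
    (hchar : ringChar F ≠ 2) (S : Finset F) (star : ↥S → ↥S → Set ↥S)
    (n : ℕ) (hn : 0 < n) :
    ∃ (U : CommNAAlg F) (u : Fin n → U.carrier),
      (∀ i, IsFusionAxis S star (u i)) ∧
      NonUnitalAlgebra.adjoin F (Set.range u) = ⊤ ∧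
      ∀ (N : CommNAAlg F) (b : Fin n → N.carrier),
        (∀ i, IsFusionAxis S star (b i)) →
        NonUnitalAlgebra.adjoin F (Set.range b) = ⊤ →
        (∃! φ : U.carrier →ₙₐ[F] N.carrier, ∀ i, φ (u i) = b i) ∧
        ∀ φ : U.carrier →ₙₐ[F] N.carrier, (∀ i, φ (u i) = b i) →
          Function.Surjective φ := by
  classical
  refine ⟨{ carrier := Ucar F S star n }, uU F S star n,
    fun i => U_axis F S star n i, U_adjoin_top F S star n, ?_⟩
  intro N b hb hgen
  set ψ := FreeNonUnitalNonAssocAlgebra.lift F b with hψ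
  have hJ : Good F S star (LinearMap.ker (linOf F n ψ)) := good_ker F S star n b hb
  have hKJ := KK_le F S star n hJ
  let φlin := (KK F S star n).liftQ (linOf F n ψ) hKJ
  let φ : Ucar F S star n →ₙₐ[F] N.carrier :=
    { toFun := φlin
      map_smul' := map_smul φlin
      map_zero' := map_zero φlin
      map_add' := map_add φlin
      map_mul' := by
        intro zz ww
        obtain ⟨x, rfl⟩ := mkHom_surjective F S star n zz
        obtain ⟨y, rfl⟩ := mkHom_surjective F S star n ww
        show φlin (Submodule.Quotient.mk (x * y)) =
          φlin (Submodule.Quotient.mk x) * φlin (Submodule.Quotient.mk y)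
        show ψ (x * y) = ψ x * ψ y
        exact map_mul ψ x y }
  have hφu : ∀ i, φ (uU F S star n i) = b i := by
    intro i
    show ψ (wgen F n i) = b i
    exact FreeNonUnitalNonAssocAlgebra.lift_of_apply F b i
  refine ⟨⟨φ, hφu, ?_⟩, ?_⟩
  · intro φ' h'
    refine DFunLike.ext _ _ fun z => ?_
    obtain ⟨x, rfl⟩ := mkHom_surjective F S star n z
    rw [show mkHom F S star n x = Submodule.Quotient.mk x from rfl,
      key_eval F S star n b φ' h' x, key_eval F S star n b φ hφu x]
  · intro φ' h' y
    have hrange : NonUnitalAlgebra.adjoin F (Set.range b) ≤ NonUnitalAlgHom.range (R := F) ψ := by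
      refine NonUnitalAlgebra.adjoin_le ?_
      rintro _ ⟨i, rfl⟩
      exact (NonUnitalAlgHom.mem_range ψ).mpr ⟨FreeNonUnitalNonAssocAlgebra.of F i,
        FreeNonUnitalNonAssocAlgebra.lift_of_apply F b i⟩
    rw [hgen] at hrange
    obtain ⟨x, hx⟩ := (NonUnitalAlgHom.mem_range ψ).mp
      (hrange (show y ∈ (⊤ : NonUnitalSubalgebra F N.carrier) from trivial))
    refine ⟨Submodule.Quotient.mk x, ?_⟩
    rw [key_eval F S star n b φ' h' x]
    exact hx
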